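/- For all real z ≥ 0 and every real κ ≥ 1, one has (1 + z)^(2κ) ≥ 1 + 2κ·z^(2κ-1) + z^(2κ). -/

import Mathlib

open Real

/-- Superadditivity of `t ^ q` for `q ≥ 1`. -/
lemma aux_superadd {x y q : ℝ} (hx : 0 ≤ x) (hy : 0 ≤ y) (hq : 1 ≤ q) :
    x ^ q + y ^ q ≤ (x + y) ^ q := by
  have h := NNReal.add_rpow_le_rpow_add x.toNNReal y.toNNReal hq
  have := (NNReal.coe_le_coe).2 h
  simpa [NNReal.coe_rpow, Real.coe_toNNReal _ hx, Real.coe_toNNReal _ hy,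
    Real.coe_toNNReal _ (add_nonneg hx hy)] using this

/-- Tangent line inequality: for `z > 0`, `q ≥ 1`,
`(1 + z) ^ q ≥ z ^ q + q * z ^ (q - 1)`. -/
lemma aux_tangent {z q : ℝ} (hz : 0 < z) (hq : 1 ≤ q) :
    z ^ q + q * z ^ (q - 1) ≤ (1 + z) ^ q := by
  have hber := one_add_mul_self_le_rpow_one_add (s := 1 / z)
    ((by positivity : (0:ℝ) ≤ 1 / z).trans' (by norm_num)) hq
  have hzq : (0:ℝ) < z ^ q := Real.rpow_pos_of_pos hz q
  have key : z ^ q * (1 + q * (1 / z)) ≤ z ^ q * (1 + 1 / z) ^ q :=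
    mul_le_mul_of_nonneg_left hber hzq.le
  have h1 : z ^ q * (1 + 1 / z) ^ q = (1 + z) ^ q := by
    rw [← Real.mul_rpow hz.le (by positivity)]
    congr 1
    field_simp
    ring
  have h2 : z ^ q * (1 + q * (1 / z)) = z ^ q + q * z ^ (q - 1) := by
    rw [Real.rpow_sub hz, Real.rpow_one]
    field_simp
  rw [h1] at key
  rw [h2] at key
  exact key

theorem stmt_1 (z κ : ℝ) (hz : 0 ≤ z) (hκ : 1 ≤ κ) :
    1 + 2 * κ * z ^ (2 * κ - 1) + z ^ (2 * κ) ≤ (1 + z) ^ (2 * κ) := by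
  rcases eq_or_lt_of_le hz with rfl | hz'
  · rw [Real.zero_rpow (ne_of_gt (by linarith : (0:ℝ) < 2 * κ - 1)),
      Real.zero_rpow (ne_of_gt (by linarith : (0:ℝ) < 2 * κ))]
    simp [Real.one_rpow]
  set p := 2 * κ with hp
  have hp2 : 2 ≤ p := by simp [hp]; linarith
  have hq1 : 1 ≤ p - 1 := by linarith
  have h1z : (0:ℝ) < 1 + z := by linarith
  -- (1+z)^p = (1+z)^(p-1) * (1+z)
  have hsplit : (1 + z) ^ p = (1 + z) ^ (p - 1) * (1 + z) := by
    have hpe : p = (p - 1) + 1 := by ring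
    rw [hpe, Real.rpow_add h1z, Real.rpow_one]
    ring_nf
  have hz1 : z ^ (p - 1 - 1) * z = z ^ (p - 1) := by
    rw [Real.rpow_sub hz', Real.rpow_one]
    field_simp
  have hz2 : z ^ (p - 1) * z = z ^ p := by
    rw [Real.rpow_sub hz', Real.rpow_one]
    field_simp
  rcases le_total 1 ((p - 1) * z ^ (p - 1 - 1)) with hc | hc
  · -- case A: tangent bound suffices
    have ht := aux_tangent hz' hq1
    have : (z ^ (p - 1) + (p - 1) * z ^ (p - 1 - 1)) * (1 + z) ≤ (1 + z) ^ p := by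
      rw [hsplit]
      exact mul_le_mul_of_nonneg_right ht h1z.le
    nlinarith [Real.rpow_nonneg hz (p - 1), Real.rpow_nonneg hz (p - 1 - 1)]
  · -- case B: superadditivity bound suffices
    have hs : 1 + z ^ (p - 1) ≤ (1 + z) ^ (p - 1) := by
      have := aux_superadd (x := 1) (y := z) zero_le_one hz hq1
      simpa using this
    have : (1 + z ^ (p - 1)) * (1 + z) ≤ (1 + z) ^ p := by
      rw [hsplit]
      exact mul_le_mul_of_nonneg_right hs h1z.le
    nlinarith [Real.rpow_nonneg hz (p - 1), Real.rpow_nonneg hz (p - 1 - 1)]
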